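/- Every Sturmian word has infinitely many primitive factors w with ind(w) ≥ 2 (i.e., with ww a factor of u), of unbounded lengths. -/

import Mathlib

open Filter Topology

namespace SturmianPaper

variable {A : Type*} [DecidableEq A]

/-- The factor `w` occurs in the infinite word `u` at position `i`. -/
def FactorAt (u : ℕ → A) (w : List A) (i : ℕ) : Prop :=
  w = (List.range w.length).map fun j => u (i + j)

/-- `w` is a factor of the infinite word `u`. -/
def IsFactor (u : ℕ → A) (w : List A) : Prop := ∃ i, FactorAt u w i

/-- The factor complexity of `u`: the number of factors of length `n`. -/
noncomputable def complexity (u : ℕ → A) (n : ℕ) : ℕ :=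
  Set.ncard {w : List A | IsFactor u w ∧ w.length = n}

/-- A Sturmian word: complexity `n + 1` for every `n` (this forces aperiodicity). -/
def IsSturmian (u : ℕ → A) : Prop := ∀ n, complexity u n = n + 1

/-- `u` is eventually periodic. -/
def EventuallyPeriodic (u : ℕ → A) : Prop :=
  ∃ p > 0, ∃ N, ∀ n ≥ N, u (n + p) = u n

/-- `u` is uniformly recurrent: every factor occurs with bounded gaps. -/
def UniformlyRecurrent (u : ℕ → A) : Prop :=
  ∀ w, IsFactor u w → ∃ B, ∀ k, ∃ i, k ≤ i ∧ i < k + B ∧ FactorAt u w i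

/-- The number of occurrences of `w` in the finite word `x`. -/
def occCount (x w : List A) : ℕ :=
  ((List.range (x.length + 1)).filter fun i => decide (w <+: x.drop i)).length

/-- `v` is a return word of the factor `w` of `u`. -/
def IsReturnWord (u : ℕ → A) (w v : List A) : Prop :=
  v ≠ [] ∧ IsFactor u (v ++ w) ∧ w <+: v ++ w ∧ occCount (v ++ w) w = 2

/-- Recurrence function: `R n + 1` is the maximal length of a complete return word
`v ++ w` over factors `w` of length `n` and return words `v` of `w`. -/
noncomputable def recFun (u : ℕ → A) (n : ℕ) : ℕ :=
  sSup {m | ∃ w v, IsFactor u w ∧ w.length = n ∧ IsReturnWord u w v ∧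
    m + 1 = v.length + w.length}

/-- `v = w ^ (|v| / |w|)`: `v` is a fractional power of `w`,
i.e. a prefix of `w w w ⋯` of length at least `|w|`. -/
def FracPow (w v : List A) : Prop :=
  w ≠ [] ∧ w.length ≤ v.length ∧ ∀ i < v.length, v[i]? = w[i % w.length]?

/-- The set of rational exponents `r` (viewed inside `ℝ`) such that `w ^ r ∈ L(u)`. -/
def expSet (u : ℕ → A) (w : List A) : Set ℝ :=
  {r | ∃ v, IsFactor u v ∧ FracPow w v ∧ r = (v.length : ℝ) / (w.length : ℝ)}

/-- The index of the factor `w` in `u`: `sup {r ∈ ℚ | w ^ r ∈ L(u)}`. -/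
noncomputable def index (u : ℕ → A) (w : List A) : ℝ := sSup (expSet u w)

/-- A finite word is primitive if it is not a proper integer power. -/
def Primitive (w : List A) : Prop :=
  w ≠ [] ∧ ∀ (z : List A) (k : ℕ), 2 ≤ k → w ≠ (List.replicate k z).flatten

/-- `w` is left special in `u` (alphabet `Bool`, `true = A`, `false = B`). -/
def LeftSpecial (u : ℕ → Bool) (w : List Bool) : Prop :=
  IsFactor u (true :: w) ∧ IsFactor u (false :: w)

/-- `w` is right special in `u`. -/
def RightSpecial (u : ℕ → Bool) (w : List Bool) : Prop :=
  IsFactor u (w ++ [true]) ∧ IsFactor u (w ++ [false])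

/-- The Sturmian word of slope `α` and intercept `x₀`, coding the orbit of `x₀`
under the exchange of the two intervals `I_A = [0, α)` (coded `true`) and
`I_B = [α, 1)` (coded `false`); the exchange is the rotation `x ↦ x + (1 - α) mod 1`. -/
noncomputable def sturmianWord (α x₀ : ℝ) : ℕ → Bool :=
  fun n => decide (Int.fract (x₀ + n * (1 - α)) < α)

/-- The Sturmian morphism `A ↦ AᶜB`, `B ↦ A` applied to a finite word. -/
def phiW (c : ℕ) (w : List Bool) : List Bool :=
  (w.map fun b => if b then List.replicate c true ++ [false] else [true]).flatten

/-- The Sturmian morphism `A ↦ AᶜB`, `B ↦ A` applied to an infinite word. -/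
noncomputable def phiInf (c : ℕ) (u : ℕ → Bool) : ℕ → Bool :=
  fun n => (phiW c ((List.range (n + 1)).map u)).getD n false


set_option linter.unusedSectionVars false
set_option linter.unusedVariables false

/-! ### windows -/

def win (u : ℕ → A) (i n : ℕ) : List A := (List.range n).map fun j => u (i + j)

@[simp] lemma win_length (u : ℕ → A) (i n : ℕ) : (win u i n).length = n := by
  simp [win]

lemma win_getElem (u : ℕ → A) {i n t : ℕ} (h : t < n) :
    (win u i n)[t]'(by simpa using h) = u (i + t) := by
  simp [win]

lemma win_getElem? (u : ℕ → A) {i n t : ℕ} (h : t < n) :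
    (win u i n)[t]? = some (u (i + t)) := by
  rw [List.getElem?_eq_getElem (by simpa using h), win_getElem u h]

lemma factorAt_win (u : ℕ → A) (i n : ℕ) : FactorAt u (win u i n) i := by
  unfold FactorAt; rw [win_length]; rfl

lemma isFactor_win (u : ℕ → A) (i n : ℕ) : IsFactor u (win u i n) := ⟨i, factorAt_win u i n⟩

lemma isFactor_elim {u : ℕ → A} {w : List A} (h : IsFactor u w) :
    ∃ i, w = win u i w.length := h

lemma win_succ (u : ℕ → A) (i n : ℕ) :
    win u i (n + 1) = win u i n ++ [u (i + n)] := by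
  simp [win, List.range_succ]

lemma win_eq_of (u : ℕ → A) {i j n : ℕ} (h : ∀ t, t < n → u (i + t) = u (j + t)) :
    win u i n = win u j n := by
  apply List.ext_getElem (by simp)
  intro t h1 h2
  rw [win_getElem u (by simpa using h1), win_getElem u (by simpa using h2)]
  exact h t (by simpa using h1)

lemma of_win_eq (u : ℕ → A) {i j n : ℕ} (h : win u i n = win u j n) :
    ∀ t, t < n → u (i + t) = u (j + t) := by
  intro t ht
  have := congrArg (fun l : List A => l[t]?) h
  simp only [win_getElem? u ht] at this
  exact Option.some.inj this

/-! ### finiteness and counting -/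

lemma Fs_finite {u : ℕ → A} (hst : IsSturmian u) (n : ℕ) :
    {w : List A | IsFactor u w ∧ w.length = n}.Finite := by
  by_contra h
  have h0 : Set.ncard {w : List A | IsFactor u w ∧ w.length = n} = 0 :=
    Set.Infinite.ncard h
  have h1 := hst n
  unfold complexity at h1
  omega

def RSpec (u : ℕ → A) (w : List A) : Prop :=
  ∃ x y : A, x ≠ y ∧ IsFactor u (w ++ [x]) ∧ IsFactor u (w ++ [y])

open Classical in
noncomputable def extw (u : ℕ → A) (w : List A) : List A :=
  if h : IsFactor u w then w ++ [u (h.choose + w.length)] else w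

lemma extw_spec {u : ℕ → A} {w : List A} (h : IsFactor u w) :
    ∃ c : A, extw u w = w ++ [c] ∧ IsFactor u (w ++ [c]) := by
  unfold extw
  rw [dif_pos h]
  refine ⟨u (h.choose + w.length), rfl, ?_⟩
  have hw := h.choose_spec
  unfold FactorAt at hw
  refine ⟨h.choose, ?_⟩
  unfold FactorAt
  have hlen : (w ++ [u (h.choose + w.length)]).length = w.length + 1 := by simp
  erw [hlen, List.range_succ, List.map_append]
  simp only [List.map_cons, List.map_nil]
  rw [← hw]

lemma rspec_unique {u : ℕ → A} (hst : IsSturmian u) {n : ℕ} {v₁ v₂ : List A}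
    (h₁ : IsFactor u v₁) (l₁ : v₁.length = n) (h₂ : IsFactor u v₂) (l₂ : v₂.length = n)
    (r₁ : RSpec u v₁) (r₂ : RSpec u v₂) : v₁ = v₂ := by
  by_contra hne
  -- the two chosen "second extensions"
  obtain ⟨c₁, he₁, hf₁⟩ := extw_spec h₁
  obtain ⟨c₂, he₂, hf₂⟩ := extw_spec h₂
  obtain ⟨x₁, y₁, hxy₁, hx₁, hy₁⟩ := r₁
  obtain ⟨x₂, y₂, hxy₂, hx₂, hy₂⟩ := r₂
  have pick : ∀ (v : List A) (c x y : A), x ≠ y → IsFactor u (v ++ [x]) → IsFactor u (v ++ [y]) →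
      ∃ a, a ≠ c ∧ IsFactor u (v ++ [a]) := by
    intro v c x y hxy hx hy
    by_cases hxc : x = c
    · exact ⟨y, by rw [← hxc]; exact hxy.symm, hy⟩
    · exact ⟨x, hxc, hx⟩
  obtain ⟨a₁, ha₁c, ha₁f⟩ := pick v₁ c₁ x₁ y₁ hxy₁ hx₁ hy₁
  obtain ⟨a₂, ha₂c, ha₂f⟩ := pick v₂ c₂ x₂ y₂ hxy₂ hx₂ hy₂
  have concat_inj : ∀ (w w' : List A) (c c' : A), w ++ [c] = w' ++ [c'] → w = w' ∧ c = c' := by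
    intro w w' c c' h
    have h1 := congrArg List.dropLast h
    rw [List.dropLast_concat, List.dropLast_concat] at h1
    subst h1
    have h2 := List.append_cancel_left h
    simp at h2
    exact ⟨rfl, h2⟩
  set S : Set (List A) := {w : List A | IsFactor u w ∧ w.length = n + 1} with hS
  have hSfin : S.Finite := Fs_finite hst (n + 1)
  have hScard : S.ncard = n + 2 := hst (n + 1)
  set F : Set (List A) := {w : List A | IsFactor u w ∧ w.length = n} with hF
  have hFfin : F.Finite := Fs_finite hst n
  have hFcard : F.ncard = n + 1 := hst n
  have hinj : Set.InjOn (extw u) F := by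
    intro w hw w' hw' he
    obtain ⟨c, hc, -⟩ := extw_spec hw.1
    obtain ⟨c', hc', -⟩ := extw_spec hw'.1
    rw [hc, hc'] at he
    exact (concat_inj _ _ _ _ he).1
  have himgcard : ((extw u) '' F).ncard = n + 1 := by
    rw [Set.ncard_image_of_injOn hinj, hFcard]
  have hv₁F : v₁ ∈ F := ⟨h₁, l₁⟩
  have hv₂F : v₂ ∈ F := ⟨h₂, l₂⟩
  have hnotim : ∀ (v : List A) (a c : A), v ∈ F → extw u v = v ++ [c] → a ≠ c →
      v ++ [a] ∉ (extw u) '' F := by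
    rintro v a c hvF hvc hac ⟨w, hwF, hwe⟩
    obtain ⟨cw, hcw, -⟩ := extw_spec hwF.1
    rw [hcw] at hwe
    obtain ⟨rfl, rfl⟩ := concat_inj _ _ _ _ hwe
    rw [hvc] at hcw
    exact hac (concat_inj _ _ _ _ hcw).2.symm
  have hnm₁ : v₁ ++ [a₁] ∉ (extw u) '' F := hnotim v₁ a₁ c₁ hv₁F he₁ ha₁c
  have hnm₂ : v₂ ++ [a₂] ∉ (extw u) '' F := hnotim v₂ a₂ c₂ hv₂F he₂ ha₂c
  have hne12 : v₁ ++ [a₁] ≠ v₂ ++ [a₂] := fun h => hne (concat_inj _ _ _ _ h).1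
  set T : Set (List A) := insert (v₁ ++ [a₁]) (insert (v₂ ++ [a₂]) ((extw u) '' F)) with hT
  have hTsub : T ⊆ S := by
    rintro w (rfl | rfl | ⟨w', hw', rfl⟩)
    · exact ⟨ha₁f, by simp [l₁]⟩
    · exact ⟨ha₂f, by simp [l₂]⟩
    · obtain ⟨c, hc, hcf⟩ := extw_spec hw'.1
      rw [hc]
      exact ⟨hcf, by simp [hw'.2]⟩
  have h2c : (insert (v₂ ++ [a₂]) ((extw u) '' F)).ncard = n + 2 := by
    rw [Set.ncard_insert_of_notMem hnm₂ (hFfin.image _), himgcard]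
  have h3c : T.ncard = n + 3 := by
    rw [hT, Set.ncard_insert_of_notMem ?_ ((hFfin.image _).insert _), h2c]
    rintro (h | h)
    · exact hne12 h
    · exact hnm₁ h
  have := Set.ncard_le_ncard hTsub hSfin
  omega

/-! ### eventually periodic words are not Sturmian -/

lemma not_evp {u : ℕ → A} (hst : IsSturmian u) : ¬ EventuallyPeriodic u := by
  rintro ⟨p, hp, N₀, hper⟩
  set M := N₀ + p with hM
  have key : ∀ i, ∃ i' < M, win u i' M = win u i M := by
    intro i
    induction i using Nat.strong_induction_on with
    | _ i ih =>
      by_cases hi : i < M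
      · exact ⟨i, hi, rfl⟩
      · push_neg at hi
        obtain ⟨i', hi', he⟩ := ih (i - p) (by omega)
        refine ⟨i', hi', he.trans ?_⟩
        apply win_eq_of
        intro t ht
        have : i - p + t + p = i + t := by omega
        rw [← this]
        exact (hper (i - p + t) (by omega)).symm
  have hsub : {w : List A | IsFactor u w ∧ w.length = M} ⊆
      ↑((Finset.range M).image (fun i' => win u i' M)) := by
    rintro w ⟨hw, hl⟩
    obtain ⟨i, hi⟩ := isFactor_elim hw
    rw [hl] at hi
    rw [hi]
    obtain ⟨i', hi', he⟩ := key i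
    simp only [Finset.coe_image, Finset.coe_range, Set.mem_image, Set.mem_Iio]
    exact ⟨i', hi', he⟩
  have hle := Set.ncard_le_ncard hsub (Set.toFinite _)
  rw [Set.ncard_coe_finset] at hle
  have hcard := (hst M)
  unfold complexity at hcard
  have him := Finset.card_image_le (s := Finset.range M) (f := fun i' => win u i' M)
  rw [Finset.card_range] at him
  omega

lemma breaks_infinite {u : ℕ → A} (hst : IsSturmian u) {p : ℕ} (hp : 0 < p) :
    {m : ℕ | u (m + p) ≠ u m}.Infinite := by
  by_contra h
  rw [Set.not_infinite] at h
  obtain ⟨N₀, hN₀⟩ := h.bddAbove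
  refine not_evp hst ⟨p, hp, N₀ + 1, fun m hm => ?_⟩
  by_contra hne
  have := hN₀ (Set.mem_setOf.mpr hne)
  omega

/-! ### no unbounded local periodicity -/

lemma periodic_factor_bound {u : ℕ → A} (hst : IsSturmian u) {p : ℕ} (hp : 0 < p) :
    ∃ L, ∀ i n, (∀ t, t + p < n → u (i + t + p) = u (i + t)) → n < L := by
  by_contra hc
  push_neg at hc
  classical
  have key : ∀ ℓ, p + 1 ≤ ℓ → ∃ j, u (j + p) = u j ∧ RSpec u (win u j ℓ) := by
    intro ℓ hℓ
    obtain ⟨i₀, n₀, hseg, hn₀⟩ := hc (ℓ + 2 * p + 1)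
    have hge₀ : ∀ m, i₀ ≤ m → m + p < i₀ + ℓ + 2 * p → u (m + p) = u m := by
      intro m hm hmp
      have ht := hseg (m - i₀) (by omega)
      have e1 : i₀ + (m - i₀) + p = m + p := by omega
      have e2 : i₀ + (m - i₀) = m := by omega
      rw [e1, e2] at ht
      exact ht
    have hex : ∃ e, ¬ (∀ m, i₀ ≤ m → m + p < e → u (m + p) = u m) := by
      by_contra hall
      push_neg at hall
      refine not_evp hst ⟨p, hp, i₀, fun m hm => ?_⟩
      exact hall (m + p + 1) m hm (by omega)
    obtain ⟨e₁, hbad, hmin⟩ : ∃ e, (¬ (∀ m, i₀ ≤ m → m + p < e → u (m + p) = u m)) ∧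
        ∀ e', e' < e → ∀ m, i₀ ≤ m → m + p < e' → u (m + p) = u m := by
      refine ⟨Nat.find hex, Nat.find_spec hex, fun e' he' => ?_⟩
      have := Nat.find_min hex he'
      push_neg at this
      exact this
    have h01 : i₀ + ℓ + 2 * p < e₁ := by
      by_contra hle
      push_neg at hle
      exact hbad (fun m hm hmp => hge₀ m hm (by omega))
    have hgoodstar : ∀ m, i₀ ≤ m → m + p < e₁ - 1 → u (m + p) = u m :=
      hmin (e₁ - 1) (by omega)
    push_neg at hbad
    obtain ⟨m, hmi, hme, hmne⟩ := hbad
    have hmeq : m + p = e₁ - 1 := by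
      by_contra hne'
      exact hmne (hgoodstar m hmi (by omega))
    obtain ⟨estar, hestar⟩ : ∃ e, e = e₁ - 1 := ⟨_, rfl⟩
    rw [← hestar] at hgoodstar hmeq
    have hest : i₀ + ℓ + 2 * p ≤ estar := by omega
    obtain ⟨j₂, hj₂⟩ : ∃ x, x = estar - ℓ := ⟨_, rfl⟩
    obtain ⟨j₁, hj₁⟩ : ∃ x, x = estar - ℓ - p := ⟨_, rfl⟩
    have hwin12 : win u j₁ ℓ = win u j₂ ℓ := by
      apply win_eq_of
      intro t ht
      have hgs := hgoodstar (j₁ + t) (by omega) (by omega)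
      have e3 : j₁ + t + p = j₂ + t := by omega
      rw [e3] at hgs
      exact hgs.symm
    refine ⟨j₂, ?_, ?_⟩
    · exact hgoodstar j₂ (by omega) (by omega)
    · refine ⟨u (j₂ + ℓ), u (j₁ + ℓ), ?_, ?_, ?_⟩
      · have e4 : j₂ + ℓ = m + p := by omega
        have e5 : j₁ + ℓ = m := by omega
        rw [e4, e5]
        exact hmne
      · rw [← win_succ]
        exact isFactor_win u j₂ (ℓ + 1)
      · rw [← hwin12, ← win_succ]
        exact isFactor_win u j₁ (ℓ + 1)
  have hBinf := breaks_infinite hst hp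
  have hpig := hBinf.exists_ne_map_eq_of_mapsTo
      (f := fun m => win u m (p + 1))
      (t := {w : List A | IsFactor u w ∧ w.length = p + 1})
      (fun m _ => ⟨isFactor_win u m (p + 1), win_length u m (p + 1)⟩)
      (Fs_finite hst (p + 1))
  obtain ⟨m₁, hm₁, m₂, hm₂, hne, hweq⟩ := hpig
  have main : ∀ i j : ℕ, u (i + p) ≠ u i → i < j → win u i (p + 1) = win u j (p + 1) → False := by
    intro i j hbrk hij hw
    have hall : ∀ ℓ, p + 1 ≤ ℓ → win u i ℓ = win u j ℓ := by
      intro ℓ hℓ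
      induction ℓ, hℓ using Nat.le_induction with
      | base => exact hw
      | succ ℓ hℓ ih =>
        have hnotrs : ¬ RSpec u (win u i ℓ) := by
          intro hrs
          obtain ⟨j₀, hj₀per, hj₀rs⟩ := key ℓ hℓ
          have hequ := rspec_unique hst (isFactor_win u i ℓ) (win_length u i ℓ)
            (isFactor_win u j₀ ℓ) (win_length u j₀ ℓ) hrs hj₀rs
          have h0 := of_win_eq u hequ 0 (by omega)
          have hpp := of_win_eq u hequ p (by omega)
          apply hbrk
          calc u (i + p) = u (j₀ + p) := hpp
            _ = u j₀ := hj₀per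
            _ = u (j₀ + 0) := by rw [Nat.add_zero]
            _ = u (i + 0) := h0.symm
            _ = u i := by rw [Nat.add_zero]
        have hlet : u (i + ℓ) = u (j + ℓ) := by
          by_contra hnee
          refine hnotrs ⟨u (i + ℓ), u (j + ℓ), hnee, ?_, ?_⟩
          · rw [← win_succ]
            exact isFactor_win u i (ℓ + 1)
          · rw [ih, ← win_succ]
            exact isFactor_win u j (ℓ + 1)
        rw [win_succ, win_succ, ih, hlet]
    have huniv : ∀ t, u (i + t) = u (j + t) := by
      intro t
      exact of_win_eq u (hall (t + p + 1) (by omega)) t (by omega)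
    refine not_evp hst ⟨j - i, by omega, i, fun nn hnn => ?_⟩
    have hv := huniv (nn - i)
    have e1 : i + (nn - i) = nn := by omega
    have e2 : j + (nn - i) = nn + (j - i) := by omega
    rw [e1, e2] at hv
    exact hv.symm
  rcases lt_or_gt_of_ne hne with hlt | hgt
  · exact main m₁ m₂ hm₁ hlt hweq
  · exact main m₂ m₁ hm₂ hgt hweq.symm

/-! ### primitive roots -/

lemma flatten_replicate_succ (k : ℕ) (z : List A) :
    (List.replicate (k + 1) z).flatten = z ++ (List.replicate k z).flatten := by
  rw [List.replicate_succ, List.flatten_cons]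

lemma flatten_replicate_length (k : ℕ) (z : List A) :
    ((List.replicate k z).flatten).length = k * z.length := by
  induction k with
  | zero => simp
  | succ k ih =>
    rw [flatten_replicate_succ, List.length_append, ih]
    ring

lemma flatten_replicate_getElem? {z : List A} (hm : 0 < z.length) {k t : ℕ}
    (ht : t < k * z.length) :
    ((List.replicate k z).flatten)[t]? = z[t % z.length]? := by
  induction k generalizing t with
  | zero => omega
  | succ k ih =>
    rw [flatten_replicate_succ]
    by_cases h : t < z.length
    · rw [List.getElem?_append, if_pos h, Nat.mod_eq_of_lt h]
    · push_neg at h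
      rw [List.getElem?_append_right h, ih (by rw [Nat.succ_mul] at ht; omega),
        Nat.mod_eq_sub_mod h]

lemma flatten_replicate_flatten (k k' : ℕ) (z : List A) :
    (List.replicate k ((List.replicate k' z).flatten)).flatten
      = (List.replicate (k * k') z).flatten := by
  induction k with
  | zero => simp
  | succ k ih =>
    rw [flatten_replicate_succ, ih, Nat.succ_mul, Nat.add_comm, List.replicate_add,
      List.flatten_append]

lemma exists_primitive_root : ∀ (B : ℕ) (w : List A), w.length ≤ B → w ≠ [] →
    ∃ z k, Primitive z ∧ 0 < k ∧ w = (List.replicate k z).flatten := by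
  intro B
  induction B with
  | zero =>
    intro w hB hne
    exact absurd (List.length_eq_zero_iff.mp (by omega)) hne
  | succ B ih =>
    intro w hB hne
    by_cases hP : Primitive w
    · exact ⟨w, 1, hP, one_pos, by simp⟩
    · unfold Primitive at hP
      push_neg at hP
      obtain ⟨z, k, hk, hw⟩ := hP hne
      have hzne : z ≠ [] := by
        intro hz
        rw [hz] at hw
        simp at hw
        exact hne hw
      have hzlen : 0 < z.length := List.length_pos_iff.mpr hzne
      have hwlen : w.length = k * z.length := by rw [hw, flatten_replicate_length]
      have hzB : z.length ≤ B := by nlinarith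
      obtain ⟨z', k', hprim, hk', hz'⟩ := ih z hzB hzne
      refine ⟨z', k * k', hprim, ?_, ?_⟩
      · have : 0 < k := by omega
        exact Nat.mul_pos this hk'
      · rw [hw, hz', flatten_replicate_flatten]

/-- every Sturmian word has primitive factors `w` of unbounded
lengths with `ww` a factor, hence with `ind(w) ≥ 2`. -/
theorem unbounded_primitive_squares {A : Type*} [DecidableEq A]
    (u : ℕ → A) (hst : IsSturmian u) (N : ℕ) :
    ∃ w : List A, IsFactor u w ∧ Primitive w ∧ N < w.length ∧
      IsFactor u (w ++ w) ∧ 2 ≤ index u w := by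
  classical
  have hQ : ∀ m : ℕ, ∃ L, ∀ i n', (∀ t, t + (m + 1) < n' → u (i + t + (m + 1)) = u (i + t)) → n' < L :=
    fun m => periodic_factor_bound hst (Nat.succ_pos m)
  choose Lf hLf using hQ
  have hLf' : ∀ q, 1 ≤ q → ∀ i n', (∀ t, t + q < n' → u (i + t + q) = u (i + t)) → n' < Lf (q - 1) := by
    intro q h1 i n' hper
    have h := hLf (q - 1) i n'
    rw [Nat.sub_add_cancel h1] at h
    exact h hper
  obtain ⟨n, hn⟩ : ∃ n, n = N + 1 + (Finset.range (N + 1)).sup Lf := ⟨_, rfl⟩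
  have hn1 : 1 ≤ n := by omega
  have hnN : N < n := by omega
  have hnL : ∀ q, 1 ≤ q → q ≤ N + 1 → Lf (q - 1) ≤ n := by
    intro q h1 h2
    have := Finset.le_sup (f := Lf) (Finset.mem_range.mpr (show q - 1 < N + 1 by omega))
    omega
  have hex : ∃ i q, N < q ∧ q ≤ n ∧ win u i n = win u (i + q) n := by
    by_contra hno
    push_neg at hno
    have hfull : ∀ i q, 1 ≤ q → q ≤ n → win u i n ≠ win u (i + q) n := by
      intro i q h1 h2 heq
      rcases le_or_gt q N with hqN | hqN
      · have hper : ∀ t, t + q < n + q → u (i + t + q) = u (i + t) := by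
          intro t ht
          have h3 : t < n := by omega
          have h4 := of_win_eq u heq t h3
          have e : i + q + t = i + t + q := by omega
          rw [e] at h4
          exact h4.symm
        have hb1 := hLf' q h1 i (n + q) hper
        have hb2 := hnL q h1 (by omega)
        omega
      · exact hno i q hqN h2 heq
    have hper : ∀ i, u (i + (n + 1)) = u i := by
      intro i
      by_cases hw : win u i n = win u (i + (n + 1)) n
      · have h0 := of_win_eq u hw 0 (by omega)
        rw [Nat.add_zero, Nat.add_zero] at h0
        exact h0.symm
      · exfalso
        have core : ∀ a b : ℕ, a < b → b < n + 2 → win u (i + a) n = win u (i + b) n → False := by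
          intro a b hab hb2 habe
          obtain ⟨q, hq⟩ : ∃ q, q = b - a := ⟨_, rfl⟩
          have h1 : 1 ≤ q := by omega
          have heqw : win u (i + a) n = win u ((i + a) + q) n := by
            have e : (i + a) + q = i + b := by omega
            rw [e]; exact habe
          rcases le_or_gt q n with hqn | hqn
          · exact hfull (i + a) q h1 hqn heqw
          · have ha : a = 0 := by omega
            have hb : b = n + 1 := by omega
            apply hw
            have e2 : (i + a) + q = i + (n + 1) := by omega
            rw [e2] at heqw
            have e1 : i + a = i := by omega
            rw [e1] at heqw
            exact heqw
        have hinj : Function.Injective (fun t : Fin (n + 2) => win u (i + (t : ℕ)) n) := by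
          intro t₁ t₂ he
          by_contra hnee
          have hne' : (t₁ : ℕ) ≠ (t₂ : ℕ) := fun h => hnee (Fin.ext h)
          have he' : win u (i + (t₁ : ℕ)) n = win u (i + (t₂ : ℕ)) n := he
          rcases lt_or_gt_of_ne hne' with h | h
          · exact core t₁ t₂ h t₂.isLt he'
          · exact core t₂ t₁ h t₁.isLt he'.symm
        have hmaps : ∀ t : Fin (n + 2), win u (i + (t : ℕ)) n ∈ (Fs_finite hst n).toFinset := by
          intro t
          rw [Set.Finite.mem_toFinset]
          exact ⟨isFactor_win u (i + (t : ℕ)) n, win_length u (i + (t : ℕ)) n⟩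
        have hsub : Finset.image (fun t : Fin (n + 2) => win u (i + (t : ℕ)) n) Finset.univ
            ⊆ (Fs_finite hst n).toFinset :=
          Finset.image_subset_iff.mpr (fun t _ => hmaps t)
        have hcard := Finset.card_le_card hsub
        rw [Finset.card_image_of_injective _ hinj, Finset.card_univ, Fintype.card_fin] at hcard
        have hc2 : (Fs_finite hst n).toFinset.card = n + 1 := by
          rw [← Set.ncard_eq_toFinset_card _ (Fs_finite hst n)]
          exact hst n
        omega
    exact not_evp hst ⟨n + 1, by omega, 0, fun m _ => hper m⟩
  obtain ⟨i, q, hqN, hqn, heq⟩ := hex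
  have hshift : ∀ s, s < n → u (i + s + q) = u (i + s) := by
    intro s hs
    have h4 := of_win_eq u heq s hs
    have e : i + q + s = i + s + q := by omega
    rw [e] at h4
    exact h4.symm
  obtain ⟨w, hwdef⟩ : ∃ w, w = win u i q := ⟨_, rfl⟩
  have hwlen : w.length = q := by rw [hwdef, win_length]
  have hwne : w ≠ [] := by
    intro h
    rw [h] at hwlen
    simp at hwlen
    omega
  obtain ⟨z, K, hzprim, hKpos, hwz⟩ := exists_primitive_root w.length w le_rfl hwne
  obtain ⟨m, hmdef⟩ : ∃ m, m = z.length := ⟨_, rfl⟩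
  have hm0 : 0 < m := by rw [hmdef]; exact List.length_pos_iff.mpr hzprim.1
  have hqm : q = K * m := by rw [← hwlen, hwz, flatten_replicate_length, hmdef]
  have hmq : m ≤ q := by
    have : 1 * m ≤ K * m := Nat.mul_le_mul_right m hKpos
    omega
  have hmaster : ∀ t, t < n + q → z[t % m]? = some (u (i + t)) := by
    intro t
    induction t using Nat.strong_induction_on with
    | _ t ih =>
      intro ht
      by_cases hTq : t < q
      · have h1 : w[t]? = some (u (i + t)) := by
          rw [hwdef]; exact win_getElem? u hTq
        have h2 : w[t]? = z[t % m]? := by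
          rw [hwz]
          have := flatten_replicate_getElem? (z := z) (k := K) (t := t)
            (by omega : 0 < z.length) (by rw [← hmdef, ← hqm]; exact hTq)
          rw [← hmdef] at this
          exact this
        rw [← h2, h1]
      · push_neg at hTq
        have ht' : t - q < n := by omega
        have hs := hshift (t - q) ht'
        have e1 : i + (t - q) + q = i + t := by omega
        rw [e1] at hs
        have hmod : (t - q) % m = t % m := by
          conv_rhs => rw [show t = t - q + K * m by omega]
          rw [Nat.add_mul_mod_self_right]
        rw [← hmod, ih (t - q) (by omega) (by omega), hs]
  have hmN : N < m := by
    by_contra hmN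
    push_neg at hmN
    have hper : ∀ t, t + m < n + q → u (i + t + m) = u (i + t) := by
      intro t ht
      have e1 := hmaster t (by omega)
      have e2 := hmaster (t + m) (by omega)
      rw [Nat.add_mod_right] at e2
      rw [e1] at e2
      have h5 := Option.some.inj e2
      rw [show i + (t + m) = i + t + m by omega] at h5
      exact h5.symm
    have hb1 := hLf' m (by omega) i (n + q) hper
    have hb2 := hnL m (by omega) (by omega)
    omega
  have hzwin : z = win u i m := by
    apply List.ext_getElem?
    intro t
    by_cases htm : t < m
    · rw [win_getElem? u htm]
      have h6 := hmaster t (by omega)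
      rw [Nat.mod_eq_of_lt htm] at h6
      exact h6
    · push_neg at htm
      rw [List.getElem?_eq_none (by omega : z.length ≤ t),
        List.getElem?_eq_none (by rw [win_length]; omega)]
  have hzzlen : (z ++ z).length = 2 * m := by
    rw [List.length_append, ← hmdef]; omega
  have hfrac : ∀ t, t < (z ++ z).length → (z ++ z)[t]? = z[t % z.length]? := by
    intro t ht2
    rw [hzzlen] at ht2
    by_cases htm : t < z.length
    · rw [List.getElem?_append, if_pos htm, Nat.mod_eq_of_lt htm]
    · push_neg at htm
      rw [List.getElem?_append, if_neg (by omega), Nat.mod_eq_sub_mod htm,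
        Nat.mod_eq_of_lt (by omega)]
  have hzz : z ++ z = win u i (2 * m) := by
    apply List.ext_getElem?
    intro t
    by_cases ht2 : t < 2 * m
    · rw [win_getElem? u ht2]
      have h7 := hmaster t (by omega)
      have h8 := hfrac t (by rw [hzzlen]; exact ht2)
      rw [← hmdef] at h8
      rw [h8, h7]
    · push_neg at ht2
      rw [List.getElem?_eq_none (by rw [hzzlen]; omega),
        List.getElem?_eq_none (by rw [win_length]; omega)]
  have hzNlen : N < z.length := by omega
  refine ⟨z, ?_, hzprim, hzNlen, ?_, ?_⟩
  · rw [hzwin]; exact isFactor_win u i m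
  · rw [hzz]; exact isFactor_win u i (2 * m)
  · have hbdd : BddAbove (expSet u z) := by
      refine ⟨(Lf (m - 1) : ℝ), ?_⟩
      rintro r ⟨v, hvf, ⟨hzne, hlen, hfp⟩, rfl⟩
      obtain ⟨j, hj⟩ := isFactor_elim hvf
      have hvper : ∀ t, t + m < v.length → u (j + t + m) = u (j + t) := by
        intro t ht
        have e1 := hfp t (by omega)
        have e2 := hfp (t + m) (by omega)
        rw [← hmdef] at e1 e2
        rw [Nat.add_mod_right] at e2
        rw [← e1] at e2
        have w1 : v[t]? = some (u (j + t)) := by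
          conv_lhs => rw [hj]
          exact win_getElem? u (show t < v.length by omega)
        have w2 : v[t + m]? = some (u (j + (t + m))) := by
          conv_lhs => rw [hj]
          exact win_getElem? u (show t + m < v.length by omega)
        rw [w1, w2] at e2
        have h9 := Option.some.inj e2
        rw [show j + (t + m) = j + t + m by omega] at h9
        exact h9
      have hvb := hLf' m (by omega) j v.length hvper
      calc (v.length : ℝ) / (z.length : ℝ) ≤ (v.length : ℝ) := by
            apply div_le_self (by positivity)
            exact_mod_cast Nat.one_le_iff_ne_zero.mpr (by omega)
        _ ≤ (Lf (m - 1) : ℝ) := by exact_mod_cast hvb.le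
    have hmem : (2 : ℝ) ∈ expSet u z := by
      refine ⟨z ++ z, by rw [hzz]; exact isFactor_win u i (2 * m),
        ⟨hzprim.1, by simp, hfrac⟩, ?_⟩
      rw [hzzlen]
      have hz0 : (z.length : ℝ) ≠ 0 := by
        exact_mod_cast (by omega : z.length ≠ 0)
      rw [← hmdef]
      field_simp
      push_cast; ring
    exact le_csSup hbdd hmem



end SturmianPaper
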